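/- Fix θ with 0 < θ ≤ π/18. Let Δ = {0, x_1, …, x_d} be a regular simplex of edge length 1 in ℝ^d, let v be a unit vector with ⟨v, x_1⟩ = max_{i,j} ⟨v, x_i - x_j⟩ and ⟨v, x_1⟩ > cos θ. Let R_θ be the rotation by angle θ in the plane spanned by v and x_1 (rotating v toward x_1), acting as the identity on the orthogonal complement. Then the rotated simplex Δ' = R_θ(Δ) satisfies cos 2θ ≤ ⟨v, R_θ x_1⟩ ≤ cos θ, and ⟨v, R_θ x_1⟩ = max_{i,j} ⟨v, R_θ x_i - R_θ x_j⟩ (with the convention x_0 = 0). -/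
import Mathlib

open RealInnerProductSpace Real

private lemma simplex_rotation_aux1 (β M : ℝ) (h0 : 0 ≤ β) (h2 : β ^ 2 = 1 - M ^ 2)
    (h9 : (0.9 : ℝ) ≤ M) : β ≤ M / 2 := by
  nlinarith [sq_nonneg (β - M / 2), sq_nonneg (β + M / 2)]

private lemma simplex_rotation_aux2 (a b c s : ℝ) (hab : a ^ 2 + b ^ 2 = 1)
    (hcs : c ^ 2 + s ^ 2 ≤ 1) : b * c - a * s ≤ 1 := by
  nlinarith [sq_nonneg (a * c + b * s), sq_nonneg (b * c - a * s - 1)]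

set_option maxHeartbeats 1000000 in
theorem simplex_rotation
    (d : ℕ) (θ : ℝ) (hθ : 0 < θ) (hθ2 : θ ≤ π / 18)
    (x : Fin (d + 1) → EuclideanSpace ℝ (Fin d))
    (hx0 : x 0 = 0)
    (hedge : ∀ i j, i ≠ j → ‖x i - x j‖ = 1)
    (v : EuclideanSpace ℝ (Fin d)) (hv : ‖v‖ = 1)
    (hmax : ∀ i j, ⟪v, x i - x j⟫ ≤ ⟪v, x 1⟫)
    (hbig : Real.cos θ < ⟪v, x 1⟫)
    -- `u` is the unit vector orthogonal to `v` in the plane spanned by `v` and `x 1`,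
    -- pointing from `v` toward `x 1`:
    (u : EuclideanSpace ℝ (Fin d)) (hu : ‖u‖ = 1) (huv : ⟪u, v⟫ = 0)
    (hx1 : x 1 = ⟪x 1, v⟫ • v + Real.sqrt (1 - ⟪x 1, v⟫ ^ 2) • u)
    -- `R` is the rotation by angle `θ` in the plane spanned by `v` and `u`,
    -- rotating `v` toward `u` (i.e. toward `x 1`), identity on the orthogonal complement:
    (R : EuclideanSpace ℝ (Fin d) ≃ₗᵢ[ℝ] EuclideanSpace ℝ (Fin d))
    (hRv : R v = Real.cos θ • v + Real.sin θ • u)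
    (hRu : R u = -Real.sin θ • v + Real.cos θ • u)
    (hRfix : ∀ w, ⟪w, v⟫ = 0 → ⟪w, u⟫ = 0 → R w = w) :
    Real.cos (2 * θ) ≤ ⟪v, R (x 1)⟫ ∧
    ⟪v, R (x 1)⟫ ≤ Real.cos θ ∧
    ∀ i j, ⟪v, R (x i) - R (x j)⟫ ≤ ⟪v, R (x 1)⟫ := by
  have hpi : (3.14 : ℝ) < π := by linarith [Real.pi_gt_d6]
  have hpi' : π < 3.15 := Real.pi_lt_d2
  have hθ18 : θ ≤ 0.175 := by nlinarith [hθ2, hpi']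
  have hθπ2 : θ < π / 2 := by linarith
  set k := Real.cos θ with hkdef
  set t := Real.sin θ with htdef
  have hk0 : 0 < k := Real.cos_pos_of_mem_Ioo ⟨by linarith, hθπ2⟩
  have ht0 : 0 ≤ t := Real.sin_nonneg_of_nonneg_of_le_pi hθ.le (by linarith)
  have htθ : t ≤ θ := Real.sin_le hθ.le
  have hkt : k ^ 2 + t ^ 2 = 1 := by
    rw [hkdef, htdef, add_comm]; exact Real.sin_sq_add_cos_sq θ
  have hk1 : k ≤ 1 := Real.cos_le_one θ
  -- handle degenerate case: (1 : Fin (d+1)) = 0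
  by_cases h10 : (1 : Fin (d + 1)) = 0
  · exfalso
    rw [h10, hx0, inner_zero_right] at hbig
    linarith
  -- main case
  have hvv : ⟪v, v⟫ = 1 := by rw [real_inner_self_eq_norm_sq, hv]; norm_num
  have huu : ⟪u, u⟫ = 1 := by rw [real_inner_self_eq_norm_sq, hu]; norm_num
  have hvu : ⟪v, u⟫ = 0 := by rw [real_inner_comm]; exact huv
  set a := ⟪x 1, v⟫ with hadef
  set b := Real.sqrt (1 - a ^ 2) with hbdef
  have hva : ⟪v, x 1⟫ = a := by rw [hadef, real_inner_comm]
  have hx1n : ‖x 1‖ = 1 := by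
    have := hedge 1 0 h10
    rwa [hx0, sub_zero] at this
  have ha1 : a ≤ 1 := by
    have := real_inner_le_norm (x 1) v
    rwa [hx1n, hv, one_mul] at this
  have hak : k < a := by rw [← hva]; exact hbig
  have ha2 : 0 ≤ 1 - a ^ 2 := by nlinarith [ha1, hak, hk0]
  have hb0 : 0 ≤ b := Real.sqrt_nonneg _
  have hb2 : b ^ 2 = 1 - a ^ 2 := Real.sq_sqrt ha2
  have hbt : b ≤ t := by
    nlinarith [hb2, hkt, hb0, ht0, mul_pos (sub_pos.2 hak) (show (0:ℝ) < a + k by linarith)]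
  have hab : a ^ 2 + b ^ 2 = 1 := by linarith
  have ha0 : 0 ≤ a := by linarith
  -- value of ⟪v, R (x 1)⟫
  have hvRx1 : ⟪v, R (x 1)⟫ = a * k - b * t := by
    conv_lhs => rw [hx1]
    rw [map_add, LinearIsometryEquiv.map_smul, LinearIsometryEquiv.map_smul, hRv, hRu]
    simp only [inner_add_right, real_inner_smul_right, hvv, hvu]
    ring
  set M := a * k - b * t with hMdef
  have hM2θ : k ^ 2 - t ^ 2 ≤ M := by
    nlinarith [mul_nonneg hk0.le (sub_nonneg.2 hak.le), mul_nonneg ht0 (sub_nonneg.2 hbt)]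
  have hM9 : (0.9 : ℝ) ≤ M := by
    nlinarith [hM2θ, hkt, ht0, htθ, hθ18]
  have hMk : M ≤ k := by
    nlinarith [mul_nonneg ht0 hb0, hk0, ha1]
  have hcos2 : Real.cos (2 * θ) = k ^ 2 - t ^ 2 := by
    rw [Real.cos_two_mul]; linarith
  refine ⟨by rw [hvRx1, hcos2]; exact hM2θ, by rw [hvRx1]; exact hMk, ?_⟩
  -- inner products of simplex vertices with x 1
  have pvals : ∀ m, ⟪x 1, x m⟫ = if m = 1 then 1 else if m = 0 then 0 else 1 / 2 := by
    intro m
    by_cases hm1 : m = 1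
    · rw [if_pos hm1, hm1, real_inner_self_eq_norm_sq, hx1n]; norm_num
    by_cases hm0 : m = 0
    · rw [if_neg hm1, if_pos hm0, hm0, hx0, inner_zero_right]
    · have hmn : ‖x m‖ = 1 := by
        have := hedge m 0 hm0
        rwa [hx0, sub_zero] at this
      have he := hedge 1 m (fun h => hm1 h.symm)
      have hns := norm_sub_sq_real (x 1) (x m)
      rw [he, hx1n, hmn] at hns
      rw [if_neg hm1, if_neg hm0]
      linarith [hns]
  intro i j
  rw [hvRx1]
  by_cases hij : i = j
  · subst hij
    rw [sub_self, inner_zero_right]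
    linarith
  by_cases hij10 : i = 1 ∧ j = 0
  · obtain ⟨hi, hj⟩ := hij10
    subst hi; subst hj
    rw [hx0, map_zero, sub_zero, hvRx1]
  -- general case
  set c := ⟪v, x i - x j⟫ with hcdef
  set s := ⟪u, x i - x j⟫ with hsdef
  have hΔΔ : ⟪x i - x j, x i - x j⟫ = 1 := by
    rw [real_inner_self_eq_norm_sq, hedge i j hij]; norm_num
  set w : EuclideanSpace ℝ (Fin d) := (x i - x j) - c • v - s • u with hwdef
  have hΔv : ⟪x i - x j, v⟫ = c := by rw [hcdef]; exact real_inner_comm _ _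
  have hΔu : ⟪x i - x j, u⟫ = s := by rw [hsdef]; exact real_inner_comm _ _
  have hwv : ⟪w, v⟫ = 0 := by
    rw [hwdef, inner_sub_left, inner_sub_left, real_inner_smul_left, real_inner_smul_left,
      hΔv, hvv, huv]
    ring
  have hwu : ⟪w, u⟫ = 0 := by
    rw [hwdef, inner_sub_left, inner_sub_left, real_inner_smul_left, real_inner_smul_left,
      hΔu, hvu, huu]
    ring
  have hvw : ⟪v, w⟫ = 0 := by rw [real_inner_comm]; exact hwv
  have huw : ⟪u, w⟫ = 0 := by rw [real_inner_comm]; exact hwu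
  have hcs : c ^ 2 + s ^ 2 ≤ 1 := by
    have hww : (0:ℝ) ≤ ⟪w, w⟫ := real_inner_self_nonneg
    have hwweq : ⟪w, w⟫ = 1 - c ^ 2 - s ^ 2 := by
      have h1 : ⟪w, w⟫ = ⟪x i - x j, w⟫ - c * ⟪v, w⟫ - s * ⟪u, w⟫ := by
        conv_lhs => rw [hwdef]
        rw [inner_sub_left, inner_sub_left, real_inner_smul_left, real_inner_smul_left]
      have h2 : ⟪x i - x j, w⟫ = 1 - c ^ 2 - s ^ 2 := by
        rw [hwdef, inner_sub_right, inner_sub_right, real_inner_smul_right,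
          real_inner_smul_right, hΔΔ, hΔv, hΔu]
        ring
      rw [h1, h2, hvw, huw]
      ring
    rw [hwweq] at hww
    linarith
  -- the constraint from the simplex structure
  have hL1 : a * c + b * s ≤ 1 / 2 := by
    have hip : ⟪x 1, x i - x j⟫ = a * c + b * s := by
      conv_lhs => rw [hx1]
      rw [inner_add_left, real_inner_smul_left, real_inner_smul_left, ← hcdef, ← hsdef]
    rw [inner_sub_right, pvals i, pvals j] at hip
    rw [← hip]
    by_cases hi1 : i = 1
    · have hj0 : j ≠ 0 := fun h => hij10 ⟨hi1, h⟩
      have hj1 : j ≠ 1 := fun h => hij (hi1.trans h.symm)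
      rw [if_pos hi1, if_neg hj1, if_neg hj0]; norm_num
    · rw [if_neg hi1]
      by_cases hi0 : i = 0
      · rw [if_pos hi0]; split_ifs <;> norm_num
      · rw [if_neg hi0]; split_ifs <;> norm_num
  -- value of ⟪v, R (x i) - R (x j)⟫
  have hvRΔ : ⟪v, R (x i) - R (x j)⟫ = c * k - s * t := by
    have hdec : x i - x j = c • v + s • u + w := by rw [hwdef]; abel
    rw [← map_sub]
    conv_lhs => rw [hdec]
    rw [map_add, map_add, LinearIsometryEquiv.map_smul, LinearIsometryEquiv.map_smul,
      hRv, hRu, hRfix w hwv hwu]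
    simp only [inner_add_right, real_inner_smul_right, hvv, hvu]
    rw [hvw]
    ring
  rw [hvRΔ]
  -- final algebraic inequality (pure scalar arithmetic from here on)
  clear_value k t a b M c s w
  clear hadef hcdef hsdef hwdef hkdef htdef
  have hβ0 : 0 ≤ k * b + t * a :=
    add_nonneg (mul_nonneg hk0.le hb0) (mul_nonneg ht0 ha0)
  have hβ2 : (k * b + t * a) ^ 2 = 1 - M ^ 2 := by
    rw [hMdef]; linear_combination (k ^ 2 + t ^ 2) * hab + hkt
  have hβle : k * b + t * a ≤ M / 2 := simplex_rotation_aux1 _ _ hβ0 hβ2 hM9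
  have hL3 : b * c - a * s ≤ 1 := simplex_rotation_aux2 a b c s hab hcs
  have hid : c * k - s * t = M * (a * c + b * s) + (k * b + t * a) * (b * c - a * s) := by
    rw [hMdef]; linear_combination (s * t - c * k) * hab
  have h1 : M * (a * c + b * s) ≤ M * (1 / 2) := by
    have := mul_le_mul_of_nonneg_left hL1 (show (0:ℝ) ≤ M by linarith)
    linarith
  have h2 : (k * b + t * a) * (b * c - a * s) ≤ (k * b + t * a) * 1 :=
    mul_le_mul_of_nonneg_left hL3 hβ0
  rw [hid]
  linarith [h1, h2, hβle]
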